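/- If two permutations A, B of {1,...,n} have equal buffer sequences M(A) = M(B), then ACK_i(A) = ACK_i(B) and max(A_1,...,A_i) = max(B_1,...,B_i) for every i; i.e., the buffer sequence determines both the ACK sequence and the running-maximum sequence. -/
import Mathlib


/-- The set of values appearing in the first `i` entries of `A` (indices `1..i`). -/
def prefSet (A : ℕ → ℕ) (i : ℕ) : Finset ℕ := (Finset.Icc 1 i).image A

/-- `H_i`: the maximum value among the first `i` entries (0 for `i = 0`). -/
def hi (A : ℕ → ℕ) (i : ℕ) : ℕ := (prefSet A i).sup id

/-- `ACK_i`: the least positive integer not among the first `i` entries. -/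
noncomputable def ackSeq (A : ℕ → ℕ) (i : ℕ) : ℕ := sInf {k | 0 < k ∧ k ∉ prefSet A i}

/-- The buffer size `M_i = H_i - (ACK_i - 1)`. -/
noncomputable def buf (A : ℕ → ℕ) (i : ℕ) : ℤ := (hi A i : ℤ) - ackSeq A i + 1

/-- `A` restricted to `{1,...,n}` is a permutation of `{1,...,n}`. -/
def IsPermOn (A : ℕ → ℕ) (n : ℕ) : Prop := Set.BijOn A (Set.Icc 1 n) (Set.Icc 1 n)

/-- The positions `1..n` can be partitioned into `k` classes, each of which
induces a strictly increasing subsequence of `A`. -/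
def SUSle (A : ℕ → ℕ) (n k : ℕ) : Prop :=
  ∃ c : ℕ → ℕ, (∀ i ∈ Finset.Icc 1 n, c i < k) ∧
    ∀ i j, i ∈ Finset.Icc 1 n → j ∈ Finset.Icc 1 n → i < j → c i = c j → A i < A j

/-- `SUS(A)`: minimum number of increasing subsequences partitioning `A₁,…,Aₙ`. -/
noncomputable def sus (A : ℕ → ℕ) (n : ℕ) : ℕ := sInf {k | SUSle A n k}

/-- `LDS(A)`: maximum length of a strictly decreasing subsequence of `A₁,…,Aₙ`. -/
noncomputable def lds (A : ℕ → ℕ) (n : ℕ) : ℕ :=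
  sSup {m | ∃ s : Fin m → ℕ, StrictMono s ∧ (∀ t, s t ∈ Finset.Icc 1 n) ∧
    ∀ t u : Fin m, t < u → A (s u) < A (s t)}

section helpers
variable {A : ℕ → ℕ} {n i k : ℕ}

lemma prefSet_succ (A : ℕ → ℕ) (i : ℕ) :
    prefSet A (i+1) = insert (A (i+1)) (prefSet A i) := by
  have h : Finset.Icc 1 (i+1) = insert (i+1) (Finset.Icc 1 i) := by
    ext x; simp [Finset.mem_Icc]; omega
  simp [prefSet, h, Finset.image_insert]

lemma mem_range_of_mem_prefSet (hA : IsPermOn A n) (hin : i ≤ n)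
    (hx : k ∈ prefSet A i) : 1 ≤ k ∧ k ≤ n := by
  simp only [prefSet, Finset.mem_image, Finset.mem_Icc] at hx
  obtain ⟨j, hj, rfl⟩ := hx
  have := hA.mapsTo (show j ∈ Set.Icc 1 n by simp [Set.mem_Icc]; omega)
  simpa [Set.mem_Icc] using this

lemma card_prefSet (hA : IsPermOn A n) (hin : i ≤ n) : (prefSet A i).card = i := by
  rw [prefSet, Finset.card_image_of_injOn, Nat.card_Icc]
  · omega
  · intro a ha b hb hab
    exact hA.injOn (by simp at ha ⊢; omega) (by simp at hb ⊢; omega) hab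

lemma notmem_prefSet (hA : IsPermOn A n) (hin : i + 1 ≤ n) :
    A (i+1) ∉ prefSet A i := by
  intro h
  simp only [prefSet, Finset.mem_image, Finset.mem_Icc] at h
  obtain ⟨j, hj, hje⟩ := h
  have := hA.injOn (show j ∈ Set.Icc 1 n by simp [Set.mem_Icc]; omega)
    (show i+1 ∈ Set.Icc 1 n by simp [Set.mem_Icc]; omega) hje
  omega

lemma ackSet_nonempty (hA : IsPermOn A n) (hin : i ≤ n) :
    {k | 0 < k ∧ k ∉ prefSet A i}.Nonempty := by
  refine ⟨n+1, by omega, fun h => ?_⟩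
  have := mem_range_of_mem_prefSet hA hin h
  omega

lemma ack_mem (hA : IsPermOn A n) (hin : i ≤ n) :
    0 < ackSeq A i ∧ ackSeq A i ∉ prefSet A i :=
  Nat.sInf_mem (ackSet_nonempty hA hin)

lemma mem_of_lt_ack (hA : IsPermOn A n) (hin : i ≤ n)
    (hk : 0 < k) (hlt : k < ackSeq A i) : k ∈ prefSet A i := by
  by_contra h
  have h2 : ackSeq A i ≤ k := Nat.sInf_le ⟨hk, h⟩
  omega

lemma le_hi (hx : k ∈ prefSet A i) : k ≤ hi A i := Finset.le_sup (f := id) hx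

lemma ack_le_hi_succ (hA : IsPermOn A n) (hin : i ≤ n) :
    ackSeq A i ≤ hi A i + 1 := by
  by_contra h
  have := le_hi (mem_of_lt_ack hA hin (k := hi A i + 1) (by omega) (by omega))
  omega

lemma hi_succ (A : ℕ → ℕ) (i : ℕ) : hi A (i+1) = max (A (i+1)) (hi A i) := by
  rw [hi, prefSet_succ, Finset.sup_insert]; rfl

lemma ack_mono_succ (hA : IsPermOn A n) (hin : i + 1 ≤ n) :
    ackSeq A i ≤ ackSeq A (i+1) := by
  have h := ack_mem hA hin
  refine Nat.sInf_le ⟨h.1, fun hc => h.2 ?_⟩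
  rw [prefSet_succ]
  exact Finset.mem_insert_of_mem hc

end helpers

section steps
variable {A : ℕ → ℕ} {n i : ℕ}

lemma buf_zero (hA : IsPermOn A n) (hin : i ≤ n) (h : buf A i = 0) :
    hi A i = i ∧ ackSeq A i = i + 1 := by
  have hle := ack_le_hi_succ hA hin
  have hpos := (ack_mem hA hin).1
  have hack : ackSeq A i = hi A i + 1 := by unfold buf at h; omega
  have hset : prefSet A i = Finset.Icc 1 (hi A i) := by
    ext x
    simp only [Finset.mem_Icc]
    constructor
    · intro hx
      exact ⟨(mem_range_of_mem_prefSet hA hin hx).1, le_hi hx⟩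
    · intro hx
      exact mem_of_lt_ack hA hin (by omega) (by omega)
  have hcard := card_prefSet hA hin
  rw [hset, Nat.card_Icc] at hcard
  constructor <;> omega

lemma stepA (hA : IsPermOn A n) (hin : i + 1 ≤ n) (ha : A (i+1) = ackSeq A i)
    (hb : buf A (i+1) ≠ 0) : hi A (i+1) = hi A i ∧ buf A (i+1) < buf A i := by
  have hin' : i ≤ n := by omega
  have hle := ack_le_hi_succ hA hin'
  have hle' := ack_le_hi_succ hA hin
  have hpos := (ack_mem hA hin').1
  have hmono := ack_mono_succ hA hin
  have hne : ackSeq A (i+1) ≠ ackSeq A i := by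
    intro he
    apply (ack_mem hA hin).2
    rw [he, prefSet_succ, ← ha]
    exact Finset.mem_insert_self _ _
  -- first rule out ackSeq A i = hi A i + 1
  have hcase : ackSeq A i ≤ hi A i := by
    by_contra hc
    have hack : ackSeq A i = hi A i + 1 := by omega
    apply hb
    have hhi1 : hi A (i+1) = hi A i + 1 := by
      rw [hi_succ, ha, hack]; omega
    have hall : ∀ k, 1 ≤ k → k ≤ hi A i + 1 → k ∈ prefSet A (i+1) := by
      intro k h1 h2
      rw [prefSet_succ]
      rcases Nat.lt_or_ge k (hi A i + 1) with h3 | h3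
      · exact Finset.mem_insert_of_mem (mem_of_lt_ack hA hin' (by omega) (by omega))
      · have : k = hi A i + 1 := by omega
        rw [this, ← hack, ← ha]
        exact Finset.mem_insert_self _ _
    have hbig : hi A i + 2 ≤ ackSeq A (i+1) := by
      by_contra hc2
      exact (ack_mem hA hin).2 (hall _ (ack_mem hA hin).1 (by omega))
    unfold buf
    rw [hhi1]
    omega
  have hhi : hi A (i+1) = hi A i := by
    rw [hi_succ, ha]; omega
  refine ⟨hhi, ?_⟩
  unfold buf
  rw [hhi]
  omega

lemma stepB (hA : IsPermOn A n) (hin : i + 1 ≤ n) (ha : A (i+1) ≠ ackSeq A i) :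
    ackSeq A (i+1) = ackSeq A i ∧ buf A i ≤ buf A (i+1) := by
  have hin' : i ≤ n := by omega
  have hmono := ack_mono_succ hA hin
  have hack : ackSeq A (i+1) = ackSeq A i := by
    refine le_antisymm (Nat.sInf_le ⟨(ack_mem hA hin').1, ?_⟩) hmono
    rw [prefSet_succ]
    intro hc
    rcases Finset.mem_insert.mp hc with h1 | h1
    · exact ha h1.symm
    · exact (ack_mem hA hin').2 h1
  have hhi : hi A i ≤ hi A (i+1) := by rw [hi_succ]; omega
  exact ⟨hack, by unfold buf; rw [hack]; omega⟩

end steps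

/-- equal buffer sequences force equal ACK sequences and equal
running-maximum sequences. -/
theorem buf_determines_ack_and_max (n : ℕ) (A B : ℕ → ℕ)
    (hA : IsPermOn A n) (hB : IsPermOn B n)
    (hbuf : ∀ i ∈ Finset.Icc 1 n, buf A i = buf B i) :
    ∀ i ∈ Finset.Icc 1 n, ackSeq A i = ackSeq B i ∧ hi A i = hi B i := by
  suffices h : ∀ i, i ≤ n → ackSeq A i = ackSeq B i ∧ hi A i = hi B i by
    intro i hi0
    simp only [Finset.mem_Icc] at hi0
    exact h i hi0.2
  intro i
  induction i with
  | zero =>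
    intro _
    have hp : prefSet A 0 = prefSet B 0 := by simp [prefSet]
    constructor
    · unfold ackSeq; rw [hp]
    · unfold hi; rw [hp]
  | succ i IH =>
    intro hin
    obtain ⟨hack, hhi⟩ := IH (by omega)
    have hb : buf A (i+1) = buf B (i+1) := hbuf (i+1) (by simp [Finset.mem_Icc]; omega)
    have hbi : buf A i = buf B i := by unfold buf; rw [hack, hhi]
    by_cases h0 : buf A (i+1) = 0
    · obtain ⟨z1, z2⟩ := buf_zero hA hin h0
      obtain ⟨w1, w2⟩ := buf_zero hB hin (hb ▸ h0)
      exact ⟨by omega, by omega⟩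
    · have h0' : buf B (i+1) ≠ 0 := by omega
      by_cases hAe : A (i+1) = ackSeq A i <;> by_cases hBe : B (i+1) = ackSeq B i
      · obtain ⟨e1, e2⟩ := stepA hA hin hAe h0
        obtain ⟨f1, f2⟩ := stepA hB hin hBe h0'
        have hieq : hi A (i+1) = hi B (i+1) := by rw [e1, f1, hhi]
        refine ⟨?_, hieq⟩
        unfold buf at hb
        omega
      · obtain ⟨e1, e2⟩ := stepA hA hin hAe h0
        obtain ⟨f1, f2⟩ := stepB hB hin hBe
        omega
      · obtain ⟨e1, e2⟩ := stepB hA hin hAe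
        obtain ⟨f1, f2⟩ := stepA hB hin hBe h0'
        omega
      · obtain ⟨e1, e2⟩ := stepB hA hin hAe
        obtain ⟨f1, f2⟩ := stepB hB hin hBe
        have hackeq : ackSeq A (i+1) = ackSeq B (i+1) := by rw [e1, f1, hack]
        refine ⟨hackeq, ?_⟩
        unfold buf at hb
        omega
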